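/- arXiv:1804.06501 — 3 statements merged into one kernel-verified Lean document; each statement's English description precedes it below -/
import Mathlib

section
/- With the hypotheses of Gaussian quadrature (nodes at roots of p_n, weights solving the moment system for degrees 0,…,n−1), all quadrature weights w_q are strictly positive. -/
open MeasureTheory

lemma integ_aux (Γ : Set ℝ) (ω : ℝ → ℝ)
    (hmom : ∀ k : ℕ, IntegrableOn (fun x => x ^ k * ω x) Γ)
    (P : Polynomial ℝ) : IntegrableOn (fun t => P.eval t * ω t) Γ := by
  induction P using Polynomial.induction_on' with
  | add p q hp hq => simpa [add_mul] using (hp.add hq : IntegrableOn (fun t => p.eval t * ω t + q.eval t * ω t) Γ)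
  | monomial k a =>
      simpa [Polynomial.eval_monomial, mul_assoc, IntegrableOn] using (hmom k).const_mul a

lemma orth_aux (Γ : Set ℝ) (ω : ℝ → ℝ)
    (hmom : ∀ k : ℕ, IntegrableOn (fun x => x ^ k * ω x) Γ)
    (p : ℕ → Polynomial ℝ) (hdeg : ∀ m, (p m).natDegree = m)
    (horth : ∀ m k, (∫ x in Γ, (p m).eval x * (p k).eval x * ω x) = if m = k then (1:ℝ) else 0)
    (n : ℕ) :
    ∀ d : ℕ, d < n → ∀ Q : Polynomial ℝ, Q.natDegree ≤ d →
      (∫ t in Γ, (p n * Q).eval t * ω t) = 0 := by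
  have hpne : ∀ m, p m ≠ 0 := by
    intro m hm
    have := horth m m
    simp [hm] at this
  intro d
  induction d with
  | zero =>
    intro hn0 Q hQ
    obtain ⟨a, rfl⟩ := Polynomial.natDegree_eq_zero.mp (Nat.le_zero.mp hQ)
    obtain ⟨b, hb⟩ := Polynomial.natDegree_eq_zero.mp (hdeg 0)
    have hb0 : b ≠ 0 := by
      intro h
      apply hpne 0
      rw [← hb, h, Polynomial.C_0]
    have key : ∀ t : ℝ, (p n * Polynomial.C a).eval t * ω t
        = (a / b) * ((p n).eval t * (p 0).eval t * ω t) := by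
      intro t
      rw [← hb]
      simp only [Polynomial.eval_mul, Polynomial.eval_C]
      field_simp
    rw [show (fun t => (p n * Polynomial.C a).eval t * ω t) = fun t => (a / b) * ((p n).eval t * (p 0).eval t * ω t) from funext key] at *
    rw [MeasureTheory.integral_const_mul, horth n 0]
    simp [Nat.pos_iff_ne_zero.mp hn0]
  | succ d ih =>
    intro hdn Q hQ
    have hdn' : d < n := Nat.lt_of_succ_lt hdn
    set c : ℝ := Q.coeff (d + 1) / (p (d + 1)).leadingCoeff with hc
    set Q' : Polynomial ℝ := Q - Polynomial.C c * p (d + 1) with hQ'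
    have hlc : (p (d + 1)).leadingCoeff ≠ 0 := Polynomial.leadingCoeff_ne_zero.mpr (hpne _)
    have hQ'deg : Q'.natDegree ≤ d := by
      rw [Polynomial.natDegree_le_iff_coeff_eq_zero]
      intro m hm
      rcases Nat.lt_or_ge (d + 1) m with h | h
      · simp only [hQ', Polynomial.coeff_sub, Polynomial.coeff_C_mul]
        rw [Polynomial.coeff_eq_zero_of_natDegree_lt (lt_of_le_of_lt hQ h),
          Polynomial.coeff_eq_zero_of_natDegree_lt (by rw [hdeg]; exact h)]
        ring
      · have hm1 : m = d + 1 := le_antisymm h hm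
        subst hm1
        simp only [hQ', Polynomial.coeff_sub, Polynomial.coeff_C_mul]
        have : (p (d + 1)).coeff (d + 1) = (p (d + 1)).leadingCoeff := by
          rw [Polynomial.leadingCoeff, hdeg]
        rw [this, hc]
        field_simp
        ring
    have heq : ∀ t : ℝ, (p n * Q).eval t * ω t
        = (p n * Q').eval t * ω t + c * ((p n).eval t * (p (d+1)).eval t * ω t) := by
      intro t
      simp only [hQ', Polynomial.eval_mul, Polynomial.eval_sub, Polynomial.eval_C]
      ring
    rw [show (fun t => (p n * Q).eval t * ω t) = fun t => (p n * Q').eval t * ω t + c * ((p n).eval t * (p (d+1)).eval t * ω t) from funext heq]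
    have h1 : IntegrableOn (fun t => (p n * Q').eval t * ω t) Γ := integ_aux Γ ω hmom _
    have h2 : IntegrableOn (fun t => c * ((p n).eval t * (p (d+1)).eval t * ω t)) Γ := by
      have := (integ_aux Γ ω hmom (p n * p (d+1))).const_mul c
      simpa [Polynomial.eval_mul, mul_assoc, IntegrableOn] using this
    rw [MeasureTheory.integral_add h1 h2, ih hdn' Q' hQ'deg,
      MeasureTheory.integral_const_mul, horth n (d+1)]
    have : n ≠ d + 1 := Nat.ne_of_gt hdn
    simp [this]

/-- Positivity of Gaussian quadrature weights: if the nodes are the roots of the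
`n`-th orthonormal polynomial and the weights make the rule exact on polynomials
of degree `≤ n - 1`, then all weights are strictly positive. -/
theorem stmt_2 (Γ : Set ℝ) (hΓm : MeasurableSet Γ)
    (ω : ℝ → ℝ) (hω : ∀ x ∈ Γ, 0 < ω x)
    (hmom : ∀ k : ℕ, IntegrableOn (fun x => x ^ k * ω x) Γ)
    (p : ℕ → Polynomial ℝ) (hdeg : ∀ m, (p m).natDegree = m)
    (horth : ∀ m k, (∫ x in Γ, (p m).eval x * (p k).eval x * ω x) = if m = k then (1:ℝ) else 0)
    (n : ℕ) (hn : 0 < n)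
    (x : Fin n → ℝ) (hroots : ∀ q, (p n).eval (x q) = 0) (hx : Function.Injective x)
    (w : Fin n → ℝ)
    (hexact : ∀ P : Polynomial ℝ, P.natDegree ≤ n - 1 →
      (∫ t in Γ, P.eval t * ω t) = ∑ q, P.eval (x q) * w q) :
    ∀ q, 0 < w q := by
  have hpne : ∀ m, p m ≠ 0 := by
    intro m hm
    have := horth m m
    simp [hm] at this
  -- extended exactness up to degree 2n-2
  have hexact2 : ∀ P : Polynomial ℝ, P.natDegree ≤ 2 * n - 2 →
      (∫ t in Γ, P.eval t * ω t) = ∑ q, P.eval (x q) * w q := by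
    intro P hP
    set m : Polynomial ℝ := p n * Polynomial.C ((p n).leadingCoeff)⁻¹ with hm
    have hmon : m.Monic := Polynomial.monic_mul_leadingCoeff_inv (hpne n)
    have hmdeg : m.natDegree = n := by
      rw [hm, Polynomial.natDegree_mul_C (inv_ne_zero (Polynomial.leadingCoeff_ne_zero.mpr (hpne n))), hdeg]
    have hm1 : m ≠ 1 := by
      intro h
      rw [h, Polynomial.natDegree_one] at hmdeg
      omega
    have hR : (P %ₘ m).natDegree ≤ n - 1 := by
      have := Polynomial.natDegree_modByMonic_lt P hmon hm1
      omega
    have hQdeg : (P /ₘ m).natDegree ≤ 2 * n - 2 - n := by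
      rw [Polynomial.natDegree_divByMonic P hmon, hmdeg]
      omega
    have hQn : (P /ₘ m).natDegree < n := by omega
    have hsplit : P = m * (P /ₘ m) + P %ₘ m := by
      conv_lhs => rw [← Polynomial.modByMonic_add_div P m]
      ring
    have hint0 : (∫ t in Γ, (m * (P /ₘ m)).eval t * ω t) = 0 := by
      have hrw : m * (P /ₘ m) = p n * (Polynomial.C ((p n).leadingCoeff)⁻¹ * (P /ₘ m)) := by
        rw [hm]; ring
      rw [hrw]
      exact orth_aux Γ ω hmom p hdeg horth n ((P /ₘ m).natDegree) hQn _
        (Polynomial.natDegree_C_mul_le _ _)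
    have hfun : (fun t : ℝ => P.eval t * ω t)
        = fun t => (m * (P /ₘ m)).eval t * ω t + (P %ₘ m).eval t * ω t := by
      funext t
      conv_lhs => rw [hsplit]
      simp [Polynomial.eval_add, add_mul]
    rw [hfun, MeasureTheory.integral_add (integ_aux Γ ω hmom _) (integ_aux Γ ω hmom _),
      hint0, zero_add, hexact _ hR]
    apply Finset.sum_congr rfl
    intro q _
    have : P.eval (x q) = (P %ₘ m).eval (x q) := by
      conv_lhs => rw [hsplit]
      simp [Polynomial.eval_add, Polynomial.eval_mul, hm, hroots q]
    rw [this]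
  -- main argument
  intro q
  set P : Polynomial ℝ := ∏ r ∈ Finset.univ.erase q, (Polynomial.X - Polynomial.C (x r)) ^ 2
    with hP
  have hPeval : ∀ t : ℝ, P.eval t = ∏ r ∈ Finset.univ.erase q, (t - x r) ^ 2 := by
    intro t
    rw [hP, Polynomial.eval_prod]
    simp
  have hPdeg : P.natDegree ≤ 2 * n - 2 := by
    calc P.natDegree ≤ ∑ r ∈ Finset.univ.erase q,
          ((Polynomial.X - Polynomial.C (x r)) ^ 2).natDegree :=
        Polynomial.natDegree_prod_le _ _
      _ ≤ 2 * n - 2 := by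
        have : ∀ r : Fin n, ((Polynomial.X - Polynomial.C (x r)) ^ 2).natDegree = 2 := by
          intro r
          rw [Polynomial.natDegree_pow, Polynomial.natDegree_X_sub_C]
        rw [Finset.sum_congr rfl fun r _ => this r, Finset.sum_const,
          Finset.card_erase_of_mem (Finset.mem_univ q), Finset.card_univ, Fintype.card_fin,
          smul_eq_mul]
        omega
  have hPq : 0 < P.eval (x q) := by
    rw [hPeval]
    apply Finset.prod_pos
    intro r hr
    have hrq : r ≠ q := Finset.ne_of_mem_erase hr
    exact pow_two_pos_of_ne_zero (sub_ne_zero.mpr fun h => hrq (hx h).symm)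
  have hPr : ∀ r : Fin n, r ≠ q → P.eval (x r) = 0 := by
    intro r hrq
    rw [hPeval]
    exact Finset.prod_eq_zero (Finset.mem_erase.mpr ⟨hrq, Finset.mem_univ r⟩) (by simp)
  have hsum : (∑ r, P.eval (x r) * w r) = P.eval (x q) * w q := by
    apply Finset.sum_eq_single q
    · intro r _ hrq
      rw [hPr r hrq, zero_mul]
    · intro h
      exact absurd (Finset.mem_univ q) h
  have hnn : ∀ t ∈ Γ, 0 ≤ P.eval t * ω t := by
    intro t ht
    apply mul_nonneg _ (hω t ht).le
    rw [hPeval]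
    exact Finset.prod_nonneg fun r _ => sq_nonneg _
  -- positivity of the measure of Γ
  have hΓpos : 0 < volume (Function.support (fun t => (p 0).eval t * (p 0).eval t * ω t) ∩ Γ) := by
    rw [← setIntegral_pos_iff_support_of_nonneg_ae]
    · rw [horth 0 0]; simp
    · refine (ae_restrict_iff' hΓm).mpr (Filter.Eventually.of_forall fun t ht => ?_)
      exact mul_nonneg (mul_self_nonneg _) (hω t ht).le
    · simpa [Polynomial.eval_mul, mul_assoc] using integ_aux Γ ω hmom (p 0 * p 0)
  have hΓ : 0 < volume Γ :=
    lt_of_lt_of_le hΓpos (measure_mono Set.inter_subset_right)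
  have hP0 : P ≠ 0 := fun h => by simp [h] at hPq
  have hZ : volume {t : ℝ | P.IsRoot t} = 0 :=
    (Polynomial.finite_setOf_isRoot hP0).measure_zero _
  have hsupp : Γ \ {t : ℝ | P.IsRoot t} ⊆ Function.support (fun t => P.eval t * ω t) ∩ Γ := by
    rintro t ⟨htΓ, htP⟩
    refine ⟨?_, htΓ⟩
    simp only [Function.mem_support]
    exact mul_ne_zero (fun h => htP h) (hω t htΓ).ne'
  have hμsupp : 0 < volume (Function.support (fun t => P.eval t * ω t) ∩ Γ) := by
    refine lt_of_lt_of_le ?_ (measure_mono hsupp)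
    rw [measure_diff_null hZ]
    exact hΓ
  have hipos : 0 < ∫ t in Γ, P.eval t * ω t := by
    rw [setIntegral_pos_iff_support_of_nonneg_ae]
    · exact hμsupp
    · exact (ae_restrict_iff' hΓm).mpr (Filter.Eventually.of_forall fun t ht => hnn t ht)
    · exact integ_aux Γ ω hmom P
  have hkey : 0 < P.eval (x q) * w q := by
    rw [← hsum, ← hexact2 P hPdeg]
    exact hipos
  nlinarith [hPq, hkey]
end

section
/- Let Λ ⊆ ℕ_0^d be downward closed. Any n-point quadrature rule that exactly matches all moments of orthonormal polynomials indexed by Λ must satisfy n ≥ max{ |Θ| : Θ ⊆ ℕ_0^d, Θ + Θ ⊆ Λ }. -/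
open MeasureTheory

private lemma mono_mem_span {d : ℕ} (π : (Fin d →₀ ℕ) → MvPolynomial (Fin d) ℝ)
    (hsupp : ∀ α : Fin d →₀ ℕ, ∀ γ ∈ (π α).support, γ ≤ α)
    (hlead : ∀ α : Fin d →₀ ℕ, (π α).coeff α ≠ 0)
    (Λ : Finset (Fin d →₀ ℕ))
    (hdc : ∀ α ∈ Λ, ∀ β : Fin d →₀ ℕ, β ≤ α → β ∈ Λ) :
    ∀ γ ∈ Λ, (MvPolynomial.monomial γ (1:ℝ)) ∈
      Submodule.span ℝ ((Λ.image π : Finset (MvPolynomial (Fin d) ℝ)) : Set (MvPolynomial (Fin d) ℝ)) := by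
  intro γ
  induction γ using WellFoundedLT.induction with
  | _ γ ih =>
    intro hγ
    classical
    have hγsup : γ ∈ (π γ).support := MvPolynomial.mem_support_iff.2 (hlead γ)
    have key : (MvPolynomial.monomial γ ((π γ).coeff γ)) =
        π γ - ∑ γ' ∈ (π γ).support.erase γ, MvPolynomial.monomial γ' ((π γ).coeff γ') := by
      rw [eq_sub_iff_add_eq,
        Finset.add_sum_erase _ (fun γ' => MvPolynomial.monomial γ' ((π γ).coeff γ')) hγsup]
      exact ((π γ).as_sum).symm
    have hmem : (MvPolynomial.monomial γ ((π γ).coeff γ)) ∈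
        Submodule.span ℝ ((Λ.image π : Finset (MvPolynomial (Fin d) ℝ)) : Set _) := by
      rw [key]
      refine Submodule.sub_mem _ (Submodule.subset_span ?_) (Submodule.sum_mem _ ?_)
      · exact Finset.mem_coe.2 (Finset.mem_image_of_mem π hγ)
      · intro γ' hγ'
        have hle : γ' ≤ γ := hsupp γ γ' (Finset.mem_of_mem_erase hγ')
        have hne : γ' ≠ γ := Finset.ne_of_mem_erase hγ'
        have hlt : γ' < γ := lt_of_le_of_ne hle hne
        have h1 : (MvPolynomial.monomial γ' (1:ℝ)) ∈ _ := ih γ' hlt (hdc γ hγ γ' hle)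
        have : (MvPolynomial.monomial γ' ((π γ).coeff γ'))
            = ((π γ).coeff γ') • (MvPolynomial.monomial γ' (1:ℝ)) := by
          rw [MvPolynomial.smul_monomial, smul_eq_mul, mul_one]
        rw [this]
        exact Submodule.smul_mem _ _ h1
    have : (MvPolynomial.monomial γ (1:ℝ))
        = ((π γ).coeff γ)⁻¹ • (MvPolynomial.monomial γ ((π γ).coeff γ)) := by
      rw [MvPolynomial.smul_monomial, smul_eq_mul, inv_mul_cancel₀ (hlead γ)]
    rw [this]
    exact Submodule.smul_mem _ _ hmem

/-- Lower bound on quadrature size: any `n`-point rule matching all moments of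
an orthonormal polynomial family indexed by a downward-closed set `Λ` satisfies
`n ≥ |Θ|` for every half-set `Θ` with `Θ + Θ ⊆ Λ`. -/
theorem stmt_6 (d : ℕ) (Γ : Set (Fin d → ℝ)) (hΓm : MeasurableSet Γ)
    (ω : (Fin d → ℝ) → ℝ) (hω : ∀ x ∈ Γ, 0 ≤ ω x)
    (π : (Fin d →₀ ℕ) → MvPolynomial (Fin d) ℝ)
    (hsupp : ∀ α : Fin d →₀ ℕ, ∀ γ ∈ (π α).support, γ ≤ α)
    (hlead : ∀ α : Fin d →₀ ℕ, (π α).coeff α ≠ 0)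
    (Λ : Finset (Fin d →₀ ℕ))
    (hdc : ∀ α ∈ Λ, ∀ β : Fin d →₀ ℕ, β ≤ α → β ∈ Λ)
    (hint1 : ∀ α ∈ Λ, IntegrableOn (fun x => MvPolynomial.eval x (π α) * ω x) Γ)
    (horth : ∀ α ∈ Λ, ∀ β ∈ Λ,
      (∫ x in Γ, MvPolynomial.eval x (π α) * MvPolynomial.eval x (π β) * ω x)
        = if α = β then (1:ℝ) else 0)
    (n : ℕ) (x : Fin n → Fin d → ℝ) (w : Fin n → ℝ)
    (hquad : ∀ α ∈ Λ, (∑ q, w q * MvPolynomial.eval (x q) (π α))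
        = ∫ x in Γ, MvPolynomial.eval x (π α) * ω x) :
    ∀ Θ : Finset (Fin d →₀ ℕ), (∀ α ∈ Θ, ∀ β ∈ Θ, α + β ∈ Λ) → Θ.card ≤ n := by
  classical
  intro Θ hΘ
  -- membership of Θ in Λ
  have hΘΛ : ∀ α ∈ Θ, α ∈ Λ := fun α hα =>
    hdc (α + α) (hΘ α hα α hα) α le_self_add
  -- key discrete orthogonality
  have hdisc : ∀ α ∈ Θ, ∀ β ∈ Θ,
      (∑ q, w q * (MvPolynomial.eval (x q) (π α) * MvPolynomial.eval (x q) (π β)))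
        = if α = β then (1:ℝ) else 0 := by
    intro α hα β hβ
    set T : Finset (MvPolynomial (Fin d) ℝ) := Λ.image π with hT
    have hprodspan : π α * π β ∈ Submodule.span ℝ (T : Set (MvPolynomial (Fin d) ℝ)) := by
      rw [(π α * π β).as_sum]
      refine Submodule.sum_mem _ ?_
      intro γ hγ
      have hγΛ : γ ∈ Λ := by
        obtain ⟨a, ha, b, hb, rfl⟩ := Finset.mem_add.1 (MvPolynomial.support_mul _ _ hγ)
        exact hdc (α + β) (hΘ α hα β hβ) (a + b)
          (add_le_add (hsupp α a ha) (hsupp β b hb))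
      have : (MvPolynomial.monomial γ ((π α * π β).coeff γ))
          = ((π α * π β).coeff γ) • (MvPolynomial.monomial γ (1:ℝ)) := by
        rw [MvPolynomial.smul_monomial, smul_eq_mul, mul_one]
      rw [this]
      exact Submodule.smul_mem _ _ (mono_mem_span π hsupp hlead Λ hdc γ hγΛ)
    obtain ⟨f, -, hf⟩ := Submodule.mem_span_finset.1 hprodspan
    -- value of each basis element under quadrature = integral
    have hTval : ∀ t ∈ T, (∑ q, w q * MvPolynomial.eval (x q) t)
        = ∫ y in Γ, MvPolynomial.eval y t * ω y := by
      intro t ht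
      obtain ⟨γ, hγ, rfl⟩ := Finset.mem_image.1 ht
      exact hquad γ hγ
    have hTint : ∀ t ∈ T, IntegrableOn (fun y => MvPolynomial.eval y t * ω y) Γ := by
      intro t ht
      obtain ⟨γ, hγ, rfl⟩ := Finset.mem_image.1 ht
      exact hint1 γ hγ
    -- LHS
    have hLHS : (∑ q, w q * (MvPolynomial.eval (x q) (π α) * MvPolynomial.eval (x q) (π β)))
        = ∑ t ∈ T, f t * ∫ y in Γ, MvPolynomial.eval y t * ω y := by
      calc (∑ q, w q * (MvPolynomial.eval (x q) (π α) * MvPolynomial.eval (x q) (π β)))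
          = ∑ q, w q * MvPolynomial.eval (x q) (π α * π β) := by
            simp [MvPolynomial.eval_mul]
        _ = ∑ q, ∑ t ∈ T, f t * (w q * MvPolynomial.eval (x q) t) := by
            refine Finset.sum_congr rfl fun q _ => ?_
            rw [← hf]
            simp [Finset.mul_sum, MvPolynomial.eval_sum]
            ring_nf
        _ = ∑ t ∈ T, f t * (∑ q, w q * MvPolynomial.eval (x q) t) := by
            rw [Finset.sum_comm]
            simp [Finset.mul_sum]
        _ = ∑ t ∈ T, f t * ∫ y in Γ, MvPolynomial.eval y t * ω y := by
            exact Finset.sum_congr rfl fun t ht => by rw [hTval t ht]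
    -- RHS
    have hRHS : (∫ y in Γ, MvPolynomial.eval y (π α) * MvPolynomial.eval y (π β) * ω y)
        = ∑ t ∈ T, f t * ∫ y in Γ, MvPolynomial.eval y t * ω y := by
      have h1 : ∀ y, MvPolynomial.eval y (π α) * MvPolynomial.eval y (π β) * ω y
          = ∑ t ∈ T, f t * (MvPolynomial.eval y t * ω y) := by
        intro y
        rw [← MvPolynomial.eval_mul, ← hf]
        simp [MvPolynomial.eval_sum, Finset.sum_mul]
        refine Finset.sum_congr rfl fun t _ => ?_
        ring
      calc (∫ y in Γ, MvPolynomial.eval y (π α) * MvPolynomial.eval y (π β) * ω y)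
          = ∫ y in Γ, ∑ t ∈ T, f t * (MvPolynomial.eval y t * ω y) := by
            exact integral_congr_ae (Filter.Eventually.of_forall fun y => h1 y)
        _ = ∑ t ∈ T, ∫ y in Γ, f t * (MvPolynomial.eval y t * ω y) := by
            refine integral_finset_sum T fun t ht => ?_
            exact (hTint t ht).const_mul (f t)
        _ = ∑ t ∈ T, f t * ∫ y in Γ, MvPolynomial.eval y t * ω y := by
            exact Finset.sum_congr rfl fun t _ => MeasureTheory.integral_const_mul _ _
    rw [hLHS, ← hRHS]
    exact horth α (hΘΛ α hα) β (hΘΛ β hβ)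
  -- matrix rank argument
  let B : Matrix Θ (Fin n) ℝ := fun α q => MvPolynomial.eval (x q) (π α.1)
  let C : Matrix (Fin n) Θ ℝ := fun q β => w q * MvPolynomial.eval (x q) (π β.1)
  have hBC : B * C = 1 := by
    ext α β
    rw [Matrix.mul_apply, Matrix.one_apply]
    have h0 := hdisc α.1 α.2 β.1 β.2
    simp only [B, C]
    have h2 : (∑ q, MvPolynomial.eval (x q) (π α.1) * (w q * MvPolynomial.eval (x q) (π β.1)))
        = ∑ q, w q * (MvPolynomial.eval (x q) (π α.1) * MvPolynomial.eval (x q) (π β.1)) :=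
      Finset.sum_congr rfl fun q _ => by ring
    rw [h2, h0]
    rcases eq_or_ne α β with h | h
    · subst h; rw [if_pos rfl, if_pos rfl]
    · rw [if_neg (fun e => h (Subtype.ext e)), if_neg h]
  have h1 : Fintype.card Θ = (B * C).rank := by rw [hBC, Matrix.rank_one]
  have h2 : (B * C).rank ≤ n := by
    refine le_trans (Matrix.rank_mul_le_left B C) ?_
    simpa using Matrix.rank_le_card_width B
  calc Θ.card = Fintype.card Θ := (Fintype.card_coe Θ).symm
    _ = (B * C).rank := h1
    _ ≤ n := h2
end

section
/- The maximal half-set size of the total degree index set equals the cardinality of the half-degree simplex: for Λ = {α ∈ ℕ_0^d : |α| ≤ r}, one has max{|Θ| : Θ + Θ ⊆ Λ} = |{α ∈ ℕ_0^d : |α| ≤ ⌊r/2⌋}| = C(d + ⌊r/2⌋, d). -/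
/-- The finset of tuples with total degree at most `m`. -/
def halfSimplex (d m : ℕ) : Finset (Fin d → ℕ) :=
  (Fintype.piFinset fun _ => Finset.range (m + 1)).filter (fun α => ∑ j, α j ≤ m)

lemma mem_halfSimplex {d m : ℕ} {α : Fin d → ℕ} :
    α ∈ halfSimplex d m ↔ ∑ j, α j ≤ m := by
  simp only [halfSimplex, Finset.mem_filter, Fintype.mem_piFinset, Finset.mem_range]
  constructor
  · exact fun h => h.2
  · intro h
    refine ⟨fun j => Nat.lt_succ_of_le (le_trans ?_ h), h⟩
    exact Finset.single_le_sum (f := fun j => α j) (fun i _ => Nat.zero_le _)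
      (Finset.mem_univ j)

lemma card_halfSimplex (d m : ℕ) : (halfSimplex d m).card = (d + m).choose d := by
  induction d generalizing m with
  | zero =>
    simp only [Nat.zero_add, Nat.choose_zero_right]
    rw [Finset.card_eq_one]
    refine ⟨(fun i => 0 : Fin 0 → ℕ), ?_⟩
    ext α
    simp only [Finset.mem_singleton, mem_halfSimplex]
    constructor
    · intro _; funext i; exact absurd i.2 (by omega)
    · intro h; subst h; simp
  | succ d ih =>
    have hdecomp : halfSimplex (d + 1) m =
        (Finset.range (m + 1)).biUnion
          (fun j => (halfSimplex d (m - j)).image (Fin.cons (α := fun _ : Fin (d+1) => ℕ) j)) := by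
      ext α
      simp only [Finset.mem_biUnion, Finset.mem_range, Finset.mem_image,
        mem_halfSimplex]
      constructor
      · intro h
        have hsum : α 0 + ∑ j : Fin d, α j.succ = ∑ j, α j := (Fin.sum_univ_succ α).symm
        refine ⟨α 0, by omega, Fin.tail α, ?_, ?_⟩
        · simp only [Fin.tail]; omega
        · exact (Fin.cons_self_tail α)
      · rintro ⟨j, hj, β, hβ, rfl⟩
        rw [Fin.sum_univ_succ]
        simp only [Fin.cons_zero, Fin.cons_succ]
        omega
    rw [hdecomp, Finset.card_biUnion]
    · have hcard : ∀ j ∈ Finset.range (m + 1),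
          ((halfSimplex d (m - j)).image (Fin.cons (α := fun _ : Fin (d+1) => ℕ) j)).card = (d + (m - j)).choose d := by
        intro j _
        rw [Finset.card_image_of_injective _ (fun a b h => ?_), ih]
        have := congrArg Fin.tail h
        simpa [Fin.tail_cons] using this
      rw [Finset.sum_congr rfl hcard]
      have h1 : ∑ j ∈ Finset.range (m + 1), (d + (m - j)).choose d
          = ∑ j ∈ Finset.range (m + 1), (d + j).choose d := by
        rw [← Finset.sum_range_reflect]
        refine Finset.sum_congr rfl fun j hj => ?_
        simp only [Finset.mem_range] at hj
        congr 1
        omega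
      rw [h1]
      have h2 : ∑ j ∈ Finset.range (m + 1), (d + j).choose d
          = ∑ i ∈ Finset.Icc d (d + m), i.choose d := by
        rw [show Finset.Icc d (d + m) = (Finset.range (m + 1)).map
            ⟨fun j => d + j, fun a b h => by simp only [] at h; omega⟩ from ?_, Finset.sum_map]
        · rfl
        · ext i
          simp only [Finset.mem_Icc, Finset.mem_map, Finset.mem_range,
            Function.Embedding.coeFn_mk]
          constructor
          · intro h; exact ⟨i - d, by omega, by show d + (i - d) = i; omega⟩
          · rintro ⟨j, hj, rfl⟩; show d ≤ d + j ∧ d + j ≤ d + m; omega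
      rw [h2, Nat.sum_Icc_choose]
      congr 1
      omega
    · intro a _ b _ hab
      simp only [Finset.disjoint_left, Finset.mem_image]
      rintro α ⟨β, _, rfl⟩ ⟨γ, _, hγ⟩
      exact hab (by simpa using congrFun hγ.symm 0)

/-- The maximal half-set size of the total degree index set
`Λ = {α : |α| ≤ r}` equals the cardinality of the half-degree simplex
`{α : |α| ≤ ⌊r/2⌋}`, which is the binomial coefficient `C(d + ⌊r/2⌋, d)`. -/
theorem stmt_18 (d r : ℕ) :
    IsGreatest { k : ℕ | ∃ Θ : Finset (Fin d → ℕ),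
        (∀ α ∈ Θ, ∀ β ∈ Θ, (∑ j, (α j + β j)) ≤ r) ∧ Θ.card = k }
      (Nat.choose (d + r / 2) d) ∧
    {α : Fin d → ℕ | (∑ j, α j) ≤ r / 2}.ncard = Nat.choose (d + r / 2) d := by
  have hset : {α : Fin d → ℕ | (∑ j, α j) ≤ r / 2} = ↑(halfSimplex d (r / 2)) := by
    ext α; simp [mem_halfSimplex]
  constructor
  · constructor
    · refine ⟨halfSimplex d (r / 2), ?_, card_halfSimplex d (r / 2)⟩
      intro α hα β hβ
      rw [mem_halfSimplex] at hα hβ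
      have : ∑ j, (α j + β j) = (∑ j, α j) + ∑ j, β j := Finset.sum_add_distrib
      have h2 : r / 2 + r / 2 ≤ r := by omega
      omega
    · rintro k ⟨Θ, hΘ, rfl⟩
      rw [← card_halfSimplex d (r / 2)]
      apply Finset.card_le_card
      intro α hα
      rw [mem_halfSimplex]
      have := hΘ α hα α hα
      have : ∑ j, (α j + α j) = (∑ j, α j) + ∑ j, α j := Finset.sum_add_distrib
      omega
  · rw [hset, Set.ncard_coe_finset, card_halfSimplex]
end
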